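/- The sequence ((-1)^k / ln(k+1))_{k∈ℕ} tends to 0 (in fact lies in c₀) but does not belong to X, since ∑_{k=1}^∞ |x_{k+1}/(k+1) - x_k/k| diverges for x_k = (-1)^k/ln(k+1). Consequently c₀ is not contained in X. -/

import Mathlib

open Filter Topology

/-- Membership in `X` (0-based: `x k` is the paper's `x_{k+1}`). -/
def MemX (x : ℕ → ℝ) : Prop :=
  Summable (fun k : ℕ => |x (k + 1) / ((k : ℝ) + 2) - x k / ((k : ℝ) + 1)|) ∧
  Tendsto (fun k : ℕ => x k / ((k : ℝ) + 1)) atTop (𝓝 0)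

private lemma logpos {k : ℕ} : 0 < Real.log ((k : ℝ) + 2) := by
  apply Real.log_pos; have : (0:ℝ) ≤ (k:ℝ) := Nat.cast_nonneg k; linarith

/-- `∑ 1/((k+1) log(k+2))` diverges. -/
private lemma aux_div : ¬ Summable (fun k : ℕ => 1 / (((k : ℝ) + 1) * Real.log ((k : ℝ) + 2))) := by
  set f : ℕ → ℝ := fun k => 1 / (((k : ℝ) + 1) * Real.log ((k : ℝ) + 2)) with hf
  have hpos : ∀ k : ℕ, 0 < ((k : ℝ) + 1) * Real.log ((k : ℝ) + 2) := fun k => by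
    have h1 : (0:ℝ) < (k:ℝ) + 1 := by positivity
    exact mul_pos h1 logpos
  have hnonneg : ∀ k : ℕ, 0 ≤ f k := fun k => le_of_lt (by
    simpa [hf] using one_div_pos.mpr (hpos k))
  have hmono : ∀ ⦃m n : ℕ⦄, 0 < m → m ≤ n → f n ≤ f m := by
    intro m n _ hmn
    apply one_div_le_one_div_of_le (hpos m)
    have h1 : (m:ℝ) ≤ (n:ℝ) := Nat.cast_le.mpr hmn
    have h2 : Real.log ((m:ℝ) + 2) ≤ Real.log ((n:ℝ) + 2) := by
      apply Real.log_le_log (by positivity); linarith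
    have := (logpos (k := m)).le
    nlinarith
  intro hs
  have hcond : Summable (fun n : ℕ => 2 ^ n * f (2 ^ n)) :=
    (summable_condensed_iff_of_nonneg hnonneg hmono).mpr hs
  have hlog2 : (0:ℝ) < Real.log 2 := Real.log_pos (by norm_num)
  -- compare with harmonic series
  have hcomp : ∀ n : ℕ, 1 / (2 * Real.log 2) * (1 / ((n:ℝ) + 2)) ≤ 2 ^ n * f (2 ^ n) := by
    intro n
    have h2n1 : (1:ℝ) ≤ 2 ^ n := one_le_pow₀ (by norm_num)
    have hlogle : Real.log ((2:ℝ) ^ n + 2) ≤ ((n:ℝ) + 2) * Real.log 2 := by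
      have h4 : ((2:ℝ)) ^ ((n:ℝ) + 2) = 2 ^ n * 4 := by
        rw [Real.rpow_add (by norm_num), Real.rpow_natCast,
          show ((2:ℝ):ℝ) ^ (2:ℝ) = ((2:ℝ)) ^ ((2:ℕ):ℝ) by norm_num,
          Real.rpow_natCast]
        norm_num
      rw [← Real.log_rpow (by norm_num : (0:ℝ) < 2), h4]
      apply Real.log_le_log (by positivity)
      nlinarith
    have hlogpos : (0:ℝ) < Real.log ((2:ℝ) ^ n + 2) :=
      Real.log_pos (by nlinarith)
    have hfval : f (2 ^ n) = 1 / (((2:ℝ) ^ n + 1) * Real.log ((2:ℝ) ^ n + 2)) := by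
      simp only [hf]; push_cast; ring_nf
    rw [hfval, mul_one_div, mul_one_div, div_le_div_iff₀ (by positivity)
      (mul_pos (by positivity) hlogpos)]
    have key : ((2:ℝ) ^ n + 1) * Real.log ((2:ℝ)^n + 2) ≤ 2 ^ n * ((2 * Real.log 2) * ((n:ℝ) + 2)) := by
      have h1 : ((2:ℝ) ^ n + 1) ≤ 2 * 2 ^ n := by linarith
      calc ((2:ℝ) ^ n + 1) * Real.log ((2:ℝ)^n + 2)
          ≤ (2 * 2 ^ n) * (((n:ℝ) + 2) * Real.log 2) :=
            mul_le_mul h1 hlogle hlogpos.le (by positivity)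
        _ = 2 ^ n * ((2 * Real.log 2) * ((n:ℝ) + 2)) := by ring
    have hmul := mul_le_mul_of_nonneg_left key
      (le_of_lt (one_div_pos.mpr (by positivity : (0:ℝ) < 2 * Real.log 2)))
    calc 1 / (2 * Real.log 2) * (((2:ℝ) ^ n + 1) * Real.log ((2:ℝ)^n + 2))
        ≤ 1 / (2 * Real.log 2) * (2 ^ n * ((2 * Real.log 2) * ((n:ℝ) + 2))) := hmul
      _ = 2 ^ n * ((n:ℝ) + 2) := by field_simp
  have hharm : Summable (fun n : ℕ => 1 / ((n:ℝ) + 2)) := by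
    have h2 : (0:ℝ) < 2 * Real.log 2 := by positivity
    refine (hcond.mul_left (2 * Real.log 2)).of_nonneg_of_le
      (fun n => by positivity) (fun n => ?_)
    calc 1 / ((n:ℝ) + 2) = (2 * Real.log 2) * (1 / (2 * Real.log 2) * (1 / ((n:ℝ) + 2))) := by
          field_simp
      _ ≤ (2 * Real.log 2) * (2 ^ n * f (2 ^ n)) :=
          mul_le_mul_of_nonneg_left (hcomp n) h2.le
  have hsum1 : Summable (fun n : ℕ => 1 / ((n:ℝ))) := by
    refine (summable_nat_add_iff (f := fun n : ℕ => 1 / (n : ℝ)) 2).mp ?_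
    convert hharm using 2 with n
    exacts [rfl, by push_cast; ring]
  exact Real.not_summable_one_div_natCast hsum1

private lemma aux_eq (k : ℕ) :
    |((-1 : ℝ) ^ (k + 2) / Real.log ((k : ℝ) + 3)) / ((k : ℝ) + 2) -
        ((-1 : ℝ) ^ (k + 1) / Real.log ((k : ℝ) + 2)) / ((k : ℝ) + 1)| =
    1 / (Real.log ((k : ℝ) + 3) * ((k : ℝ) + 2)) + 1 / (Real.log ((k : ℝ) + 2) * ((k : ℝ) + 1)) := by
  have ha : (0:ℝ) < Real.log ((k : ℝ) + 3) := by
    apply Real.log_pos; have : (0:ℝ) ≤ (k:ℝ) := Nat.cast_nonneg k; linarith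
  have hb : (0:ℝ) < Real.log ((k : ℝ) + 2) := logpos
  have hk1 : (0:ℝ) < (k:ℝ) + 1 := by positivity
  have hk2 : (0:ℝ) < (k:ℝ) + 2 := by positivity
  have hs : ((-1 : ℝ) ^ (k + 2)) = -((-1:ℝ)^(k+1)) := by
    rw [pow_succ]; ring
  rw [hs]
  have hfac : (-(-1:ℝ)^(k+1) / Real.log ((k : ℝ) + 3)) / ((k : ℝ) + 2) -
      ((-1 : ℝ) ^ (k + 1) / Real.log ((k : ℝ) + 2)) / ((k : ℝ) + 1)
      = (-1:ℝ)^(k+1) * (-(1 / (Real.log ((k : ℝ) + 3) * ((k : ℝ) + 2)) +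
        1 / (Real.log ((k : ℝ) + 2) * ((k : ℝ) + 1)))) := by
    field_simp; ring
  rw [hfac, abs_mul, abs_neg, abs_pow, abs_neg, abs_one, one_pow, one_mul]
  rw [abs_of_nonneg (by positivity)]

/-- The sequence `((-1)^k / ln(k+1))_{k≥1}` (0-based: entry `k` is
`(-1)^{k+1}/ln(k+2)`) tends to `0`, yet the series
`∑ |x_{k+1}/(k+1) - x_k/k|` diverges, so it does not belong to `X`:
`c₀` is not contained in `X`. -/
theorem stmt_8 :
    Tendsto (fun k : ℕ => (-1 : ℝ) ^ (k + 1) / Real.log ((k : ℝ) + 2))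
      atTop (𝓝 0) ∧
    ¬ Summable (fun k : ℕ =>
      |((-1 : ℝ) ^ (k + 2) / Real.log ((k : ℝ) + 3)) / ((k : ℝ) + 2) -
        ((-1 : ℝ) ^ (k + 1) / Real.log ((k : ℝ) + 2)) / ((k : ℝ) + 1)|) ∧
    ¬ MemX (fun k : ℕ => (-1 : ℝ) ^ (k + 1) / Real.log ((k : ℝ) + 2)) := by
  have htend : Tendsto (fun k : ℕ => (-1 : ℝ) ^ (k + 1) / Real.log ((k : ℝ) + 2))
      atTop (𝓝 0) := by
    refine squeeze_zero_norm (a := fun k : ℕ => 1 / Real.log ((k : ℝ) + 2))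
      (fun k => ?_) ?_
    · rw [norm_div, norm_pow, norm_neg, norm_one, one_pow,
        Real.norm_eq_abs, abs_of_pos logpos]
    · have h1 : Tendsto (fun k : ℕ => Real.log ((k : ℝ) + 2)) atTop atTop :=
        Real.tendsto_log_atTop.comp
          (tendsto_atTop_add_const_right _ 2 tendsto_natCast_atTop_atTop)
      simpa [one_div, Pi.inv_def] using h1.inv_tendsto_atTop
  have hnsum : ¬ Summable (fun k : ℕ =>
      |((-1 : ℝ) ^ (k + 2) / Real.log ((k : ℝ) + 3)) / ((k : ℝ) + 2) -
        ((-1 : ℝ) ^ (k + 1) / Real.log ((k : ℝ) + 2)) / ((k : ℝ) + 1)|) := by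
    intro hsum
    apply aux_div
    refine hsum.of_nonneg_of_le (fun k => ?_) (fun k => ?_)
    · have := logpos (k := k)
      positivity
    · rw [aux_eq k]
      have ha : (0:ℝ) < Real.log ((k : ℝ) + 3) := by
        apply Real.log_pos; have : (0:ℝ) ≤ (k:ℝ) := Nat.cast_nonneg k; linarith
      have hb : (0:ℝ) < Real.log ((k : ℝ) + 2) := logpos
      have h1 : 1 / (((k : ℝ) + 1) * Real.log ((k : ℝ) + 2)) =
          1 / (Real.log ((k : ℝ) + 2) * ((k : ℝ) + 1)) := by ring_nf
      rw [h1]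
      have h2 : (0:ℝ) ≤ 1 / (Real.log ((k : ℝ) + 3) * ((k : ℝ) + 2)) := by positivity
      linarith
  refine ⟨htend, hnsum, ?_⟩
  intro h
  apply hnsum
  have := h.1
  convert this using 2 with k
  push_cast
  ring_nf
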